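/- Lemma 2. Let {p₁, …, p_m}, {q₁, …, q_k}, {r₁, …, r_s} be three finite families of plaquettes such that: all plaquette operators involved pairwise commute; each squares to the identity, i.e. b(c + α) · b(c) = 1 for each of these plaquettes (α, b) and all configurations c; the operator identity (∏_{i=1}^m B(α_{p_i}, b_{p_i})) ∘ (∏_{j=1}^k B(α_{q_j}, b_{q_j})) ∘ (∏_{l=1}^s B(α_{r_l}, b_{r_l})) = id holds on H; and each b_{r_l} satisfies b_{r_l}(c + δ) = b_{r_l}(c) for all configurations c (i.e. the flip operator X_δ : δ_c ↦ δ_{c+δ} commutes with each B(α_{r_l}, b_{r_l})). Then θ_δ(i, [p₁, …, p_m]) = θ_δ(i, [q₁, …, q_k]) for every configuration i. -/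

import Mathlib

/-- A plaquette: a flip pattern `α_p` together with a unit-modulus phase function `b_p`. -/
structure Plaquette (E : Type*) where
  flip : E → ZMod 2
  phase : (E → ZMod 2) → ℂ
  unit_phase : ∀ c, ‖phase c‖ = 1

/-- `theta δ i [p₁, …, p_m] = ∏_k b_{p_k}(i + δ + α_{p₁} + ⋯ + α_{p_{k-1}}) /
    b_{p_k}(i + α_{p₁} + ⋯ + α_{p_{k-1}})` (Eq. (21) of the paper). -/
noncomputable def theta {E : Type*} (δ : E → ZMod 2) :
    (E → ZMod 2) → List (Plaquette E) → ℂ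
  | _, [] => 1
  | i, p :: L => (p.phase (i + δ) / p.phase i) * theta δ (i + p.flip) L

/-- The string-type operator `B(α, F)`, acting on the Hilbert space
`H = EuclideanSpace ℂ (E → ZMod 2)` by `(B(α,F) ψ)(c) = F(c + α) ⬝ ψ(c + α)`,
i.e. `B(α,F) δ_c = F(c) • δ_{c+α}`. -/
noncomputable def stringOp {E : Type*} [Fintype E] [DecidableEq E]
    (α : E → ZMod 2) (F : (E → ZMod 2) → ℂ) :
    EuclideanSpace ℂ (E → ZMod 2) →ₗ[ℂ] EuclideanSpace ℂ (E → ZMod 2) where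
  toFun ψ := WithLp.toLp 2 (fun c => F (c + α) * ψ (c + α))
  map_add' ψ φ := by
    ext c
    simp [mul_add]
  map_smul' a ψ := by
    ext c
    simp [mul_comm, mul_left_comm, mul_assoc]

namespace ThetaAux

variable {E : Type*}

lemma addself (x : E → ZMod 2) : x + x = 0 := by
  funext e
  exact (by decide : ∀ a : ZMod 2, a + a = 0) _

lemma neg_eq (x : E → ZMod 2) : -x = x :=
  neg_eq_of_add_eq_zero_right (addself x)

lemma add_add_self (x y : E → ZMod 2) : x + y + y = x := by
  rw [add_assoc, addself, add_zero]

/-- Accumulated phase of a list of plaquettes. -/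
noncomputable def Phi : List (Plaquette E) → (E → ZMod 2) → ℂ
  | [], _ => 1
  | p :: L, c => p.phase (c + p.flip) * Phi L (c + p.flip)

/-- Total flip pattern of a list of plaquettes. -/
def Asum (L : List (Plaquette E)) : E → ZMod 2 := (L.map Plaquette.flip).sum

@[simp] lemma Phi_nil (c : E → ZMod 2) : Phi ([] : List (Plaquette E)) c = 1 := rfl

@[simp] lemma Phi_cons (p : Plaquette E) (L : List (Plaquette E)) (c : E → ZMod 2) :
    Phi (p :: L) c = p.phase (c + p.flip) * Phi L (c + p.flip) := rfl

@[simp] lemma Asum_nil : Asum ([] : List (Plaquette E)) = 0 := rfl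

@[simp] lemma Asum_cons (p : Plaquette E) (L : List (Plaquette E)) :
    Asum (p :: L) = p.flip + Asum L := by simp [Asum]

lemma phase_ne (p : Plaquette E) (c : E → ZMod 2) : p.phase c ≠ 0 := by
  intro h
  have := p.unit_phase c
  rw [h] at this
  simp at this

lemma Phi_ne (L : List (Plaquette E)) (c : E → ZMod 2) : Phi L c ≠ 0 := by
  induction L generalizing c with
  | nil => simp
  | cons p L ih => exact mul_ne_zero (phase_ne p _) (ih _)

/-- Commutation of two plaquette operators, phrased on phases. -/
def PComm (p q : Plaquette E) : Prop :=
  ∀ c : E → ZMod 2, p.phase (c + q.flip) * q.phase c = q.phase (c + p.flip) * p.phase c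

lemma pcomm_shift {p q : Plaquette E} (h : PComm p q) (c : E → ZMod 2) :
    p.phase (c + p.flip) * q.phase (c + q.flip + p.flip)
      = q.phase (c + q.flip) * p.phase (c + q.flip + p.flip) := by
  have h1 := h (c + q.flip + p.flip)
  have e1 : c + q.flip + p.flip + q.flip = c + p.flip := by
    rw [add_right_comm (c + q.flip), add_add_self]
  have e2 : c + q.flip + p.flip + p.flip = c + q.flip := add_add_self _ _
  rw [e1, e2] at h1
  exact h1

/-- Commutation of a single plaquette past a list's accumulated phase. -/
lemma E1 (p : Plaquette E) (M : List (Plaquette E)) (h : ∀ q ∈ M, PComm p q)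
    (c : E → ZMod 2) :
    p.phase (c + p.flip) * Phi M (c + p.flip)
      = Phi M c * p.phase (c + Asum M + p.flip) := by
  induction M generalizing c with
  | nil => simp [mul_comm]
  | cons q M ih =>
    have hpq := pcomm_shift (h q (by simp)) c
    have harg : c + p.flip + q.flip = c + q.flip + p.flip := add_right_comm _ _ _
    have ihq := ih (fun r hr => h r (by simp [hr])) (c + q.flip)
    have harg2 : c + Asum (q :: M) + p.flip = c + q.flip + Asum M + p.flip := by
      rw [Asum_cons, ← add_assoc]
    rw [Phi_cons, Phi_cons, harg, harg2]
    linear_combination Phi M (c + q.flip + p.flip) * hpq + q.phase (c + q.flip) * ihq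

/-- Commutation of two lists' accumulated phases. -/
lemma E2 (L M : List (Plaquette E)) (h : ∀ p ∈ L, ∀ q ∈ M, PComm p q)
    (c : E → ZMod 2) :
    Phi L c * Phi M (c + Asum L) = Phi M c * Phi L (c + Asum M) := by
  induction L generalizing c with
  | nil => simp [mul_comm]
  | cons p L ih =>
    have ihp := ih (fun r hr => h r (by simp [hr])) (c + p.flip)
    have he1 := E1 p M (h p (by simp)) c
    have harg : c + Asum (p :: L) = c + p.flip + Asum L := by
      rw [Asum_cons, ← add_assoc]
    have harg2 : c + Asum M + p.flip = c + p.flip + Asum M := add_right_comm _ _ _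
    rw [harg2] at he1
    rw [Phi_cons, Phi_cons, harg, harg2]
    linear_combination p.phase (c + p.flip) * ihp + Phi L (c + p.flip + Asum M) * he1

/-- Each plaquette squares to the identity. -/
def Sq (p : Plaquette E) : Prop :=
  ∀ c : E → ZMod 2, p.phase (c + p.flip) * p.phase c = 1

lemma Phi_sq (L : List (Plaquette E)) (hc : ∀ p ∈ L, ∀ q ∈ L, PComm p q)
    (hs : ∀ p ∈ L, Sq p) (c : E → ZMod 2) :
    Phi L c * Phi L (c + Asum L) = 1 := by
  induction L generalizing c with
  | nil => simp
  | cons p L ih =>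
    have ih' := ih (fun a ha b hb => hc a (by simp [ha]) b (by simp [hb]))
      (fun a ha => hs a (by simp [ha])) c
    have he1 := E1 p L (fun q hq => hc p (by simp) q (by simp [hq])) c
    have hsp := hs p (by simp) (c + Asum L)
    have harg : c + Asum (p :: L) = c + p.flip + Asum L := by
      rw [Asum_cons, ← add_assoc]
    have harg2 : c + p.flip + Asum L + p.flip = c + Asum L := by
      rw [add_right_comm (c + p.flip), add_add_self]
    rw [Phi_cons, Phi_cons, harg, harg2]
    linear_combination (p.phase (c + Asum L) * Phi L (c + Asum L)) * he1
      + (Phi L c * Phi L (c + Asum L)) * hsp + ih'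

lemma theta_mul (δ : E → ZMod 2) (L : List (Plaquette E)) (hs : ∀ p ∈ L, Sq p)
    (c : E → ZMod 2) :
    theta δ c L * Phi L (c + δ) = Phi L c := by
  induction L generalizing c with
  | nil => simp [theta]
  | cons p L ih =>
    have ih' := ih (fun a ha => hs a (by simp [ha])) (c + p.flip)
    have h1 := hs p (by simp) (c + δ)
    have h2 := hs p (by simp) c
    have hbc : p.phase c ≠ 0 := phase_ne p c
    have hinv : (p.phase c)⁻¹ = p.phase (c + p.flip) := inv_eq_of_mul_eq_one_left h2
    have harg : c + p.flip + δ = c + δ + p.flip := add_right_comm _ _ _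
    rw [harg] at ih'
    show (p.phase (c + δ) / p.phase c * theta δ (c + p.flip) L) *
      (p.phase (c + δ + p.flip) * Phi L (c + δ + p.flip)) =
      p.phase (c + p.flip) * Phi L (c + p.flip)
    rw [div_eq_mul_inv, hinv]
    linear_combination (p.phase (c + p.flip) * theta δ (c + p.flip) L *
        Phi L (c + δ + p.flip)) * h1 + p.phase (c + p.flip) * ih'

lemma Phi_dinv (δ : E → ZMod 2) (L : List (Plaquette E))
    (h : ∀ r ∈ L, ∀ c : E → ZMod 2, r.phase (c + δ) = r.phase c)
    (c : E → ZMod 2) : Phi L (c + δ) = Phi L c := by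
  induction L generalizing c with
  | nil => simp
  | cons p L ih =>
    have harg : c + δ + p.flip = c + p.flip + δ := add_right_comm _ _ _
    rw [Phi_cons, Phi_cons, harg, h p (by simp) (c + p.flip),
      ih (fun a ha => h a (by simp [ha]))]

lemma prod_apply [Fintype E] [DecidableEq E] (L : List (Plaquette E))
    (ψ : EuclideanSpace ℂ (E → ZMod 2)) (c : E → ZMod 2) :
    ((L.map fun p => stringOp p.flip p.phase).prod ψ) c
      = Phi L c * ψ (c + Asum L) := by
  induction L generalizing c ψ with
  | nil => simp
  | cons p L ih =>
    rw [List.map_cons, List.prod_cons, Module.End.mul_apply]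
    show p.phase (c + p.flip) *
      ((L.map fun p => stringOp p.flip p.phase).prod ψ) (c + p.flip) = _
    rw [ih, Phi_cons, Asum_cons, mul_assoc, ← add_assoc]

end ThetaAux

open ThetaAux

/-- Lemma 2: if the plaquette operators of three families `Pl`, `Ql`, `Rl` pairwise commute,
each squares to the identity, their total product is the identity, and each member of `Rl`
has a `δ`-translation-invariant phase (so that the flip operator `X_δ` commutes with it),
then `θ_δ(i, Pl) = θ_δ(i, Ql)` for every configuration `i`. -/
theorem theta_eq_of_total_product_eq_one {E : Type*} [Fintype E] [DecidableEq E]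
    (δ : E → ZMod 2) (Pl Ql Rl : List (Plaquette E))
    (hcomm : ∀ p ∈ Pl ++ Ql ++ Rl, ∀ q ∈ Pl ++ Ql ++ Rl, ∀ c : E → ZMod 2,
      p.phase (c + q.flip) * q.phase c = q.phase (c + p.flip) * p.phase c)
    (hsq : ∀ p ∈ Pl ++ Ql ++ Rl, ∀ c : E → ZMod 2, p.phase (c + p.flip) * p.phase c = 1)
    (hprod : (Pl.map fun p => stringOp p.flip p.phase).prod *
             (Ql.map fun p => stringOp p.flip p.phase).prod *
             (Rl.map fun p => stringOp p.flip p.phase).prod = 1)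
    (hR : ∀ r ∈ Rl, ∀ c : E → ZMod 2, r.phase (c + δ) = r.phase c)
    (i : E → ZMod 2) :
    theta δ i Pl = theta δ i Ql := by
  classical
  have memP : ∀ p ∈ Pl, p ∈ Pl ++ Ql ++ Rl := fun p hp => by simp [hp]
  have memQ : ∀ p ∈ Ql, p ∈ Pl ++ Ql ++ Rl := fun p hp => by simp [hp]
  have memR : ∀ p ∈ Rl, p ∈ Pl ++ Ql ++ Rl := fun p hp => by simp [hp]
  have hsqP : ∀ p ∈ Pl, Sq p := fun p hp c => hsq p (memP p hp) c
  have hsqQ : ∀ p ∈ Ql, Sq p := fun p hp c => hsq p (memQ p hp) c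
  have hcQQ : ∀ p ∈ Ql, ∀ q ∈ Ql, PComm p q :=
    fun p hp q hq c => hcomm p (memQ p hp) q (memQ q hq) c
  have hcRQ : ∀ p ∈ Rl, ∀ q ∈ Ql, PComm p q :=
    fun p hp q hq c => hcomm p (memR p hp) q (memQ q hq) c
  -- pointwise form of the operator identity
  have heval : ∀ (ψ : EuclideanSpace ℂ (E → ZMod 2)) (c : E → ZMod 2),
      Phi Pl c * (Phi Ql (c + Asum Pl) * (Phi Rl (c + Asum Pl + Asum Ql) *
        ψ (c + Asum Pl + Asum Ql + Asum Rl))) = ψ c := by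
    intro ψ c
    have h : ((Pl.map fun p => stringOp p.flip p.phase).prod *
             (Ql.map fun p => stringOp p.flip p.phase).prod *
             (Rl.map fun p => stringOp p.flip p.phase).prod) ψ = ψ := by
      rw [hprod]; rfl
    have h2 := congrArg (fun v : EuclideanSpace ℂ (E → ZMod 2) => v c) h
    rw [Module.End.mul_apply, Module.End.mul_apply, prod_apply, prod_apply, prod_apply] at h2
    exact h2
  have hsum : Asum Pl + Asum Ql + Asum Rl = 0 := by
    by_contra hne
    have h := heval (EuclideanSpace.single
      ((0 : E → ZMod 2) + Asum Pl + Asum Ql + Asum Rl) 1) 0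
    rw [EuclideanSpace.single_apply, EuclideanSpace.single_apply, if_pos rfl] at h
    have hx : (0 : E → ZMod 2) + Asum Pl + Asum Ql + Asum Rl
        = Asum Pl + Asum Ql + Asum Rl := by
      rw [zero_add]
    rw [if_neg (fun hh => hne (by rw [← hx, ← hh]))] at h
    exact (mul_ne_zero (Phi_ne _ _) (mul_ne_zero (Phi_ne _ _)
      (mul_ne_zero (Phi_ne _ _) one_ne_zero))) h
  have hone : ∀ c : E → ZMod 2,
      Phi Pl c * (Phi Ql (c + Asum Pl) * Phi Rl (c + Asum Pl + Asum Ql)) = 1 := by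
    intro c
    have hc : c + Asum Pl + Asum Ql + Asum Rl = c := by
      rw [add_assoc, add_assoc, ← add_assoc (Asum Pl), hsum, add_zero]
    have h := heval (EuclideanSpace.single c 1) c
    rw [hc, EuclideanSpace.single_apply, if_pos rfl] at h
    linear_combination h
  have hA1 : Asum Pl + Asum Ql = Asum Rl := by
    have h' : Asum Pl + Asum Ql = -Asum Rl := eq_neg_of_add_eq_zero_left hsum
    rw [neg_eq] at h'; exact h'
  have hA2 : Asum Rl + Asum Ql = Asum Pl := by
    calc Asum Rl + Asum Ql = Asum Pl + Asum Ql + Asum Ql := by rw [hA1]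
    _ = Asum Pl := add_add_self _ _
  -- scalar identities
  have e1 := hone i
  have e1' := hone (i + δ)
  have hw : Phi Rl (i + δ + Asum Pl + Asum Ql) = Phi Rl (i + Asum Pl + Asum Ql) := by
    have : i + δ + Asum Pl + Asum Ql = i + Asum Pl + Asum Ql + δ := by
      rw [add_right_comm i δ, add_right_comm (i + Asum Pl) δ]
    rw [this, Phi_dinv δ Rl hR]
  rw [hw] at e1'
  have hau : Phi Pl i * Phi Ql (i + Asum Pl)
      = Phi Pl (i + δ) * Phi Ql (i + δ + Asum Pl) :=
    mul_right_cancel₀ (Phi_ne Rl (i + Asum Pl + Asum Ql)) (by linear_combination e1 - e1')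
  have e2 := Phi_sq Ql hcQQ hsqQ (i + Asum Rl)
  have e2' := Phi_sq Ql hcQQ hsqQ (i + δ + Asum Rl)
  have harq : i + Asum Rl + Asum Ql = i + Asum Pl := by rw [add_assoc, hA2]
  have harq' : i + δ + Asum Rl + Asum Ql = i + δ + Asum Pl := by rw [add_assoc, hA2]
  rw [harq] at e2
  rw [harq'] at e2'
  have e3 := E2 Rl Ql hcRQ i
  have e3' := E2 Rl Ql hcRQ (i + δ)
  have hr1 : Phi Rl (i + δ) = Phi Rl i := Phi_dinv δ Rl hR i
  have hr2 : Phi Rl (i + δ + Asum Ql) = Phi Rl (i + Asum Ql) := by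
    rw [add_right_comm i δ, Phi_dinv δ Rl hR]
  rw [hr1, hr2] at e3'
  have hav : Phi Pl i * Phi Ql (i + δ + Asum Rl)
      = Phi Pl (i + δ) * Phi Ql (i + Asum Rl) := by
    linear_combination Phi Ql (i + Asum Rl) * Phi Ql (i + δ + Asum Rl) * hau
      - Phi Pl i * Phi Ql (i + δ + Asum Rl) * e2
      + Phi Pl (i + δ) * Phi Ql (i + Asum Rl) * e2'
  have hab : Phi Pl i * Phi Ql (i + δ) = Phi Ql i * Phi Pl (i + δ) :=
    mul_right_cancel₀ (Phi_ne Rl (i + Asum Ql)) (by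
      linear_combination Phi Rl i * hav + Phi Pl (i + δ) * e3 - Phi Pl i * e3')
  have tP := theta_mul δ Pl hsqP i
  have tQ := theta_mul δ Ql hsqQ i
  exact mul_right_cancel₀
    (mul_ne_zero (Phi_ne Pl (i + δ)) (Phi_ne Ql (i + δ)))
    (by linear_combination Phi Ql (i + δ) * tP - Phi Pl (i + δ) * tQ + hab)
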